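/- Let M > 0, ε > 0, e > 0, f > 0. Define p*(e, f) = e/ε if M·exp(−1) ≤ f, and p*(e, f) = (e/ε)·ln(M/f) otherwise. Then p* is the unique maximizer of R(p) = p·M·exp(−εp/e) over the feasible set {p ≥ 0 : M·exp(−εp/e) ≤ f}. -/

import Mathlib

lemma aux_peak {x : ℝ} (hx : x ≠ 1) : x * Real.exp (-x) < Real.exp (-1) := by
  have h1 : x - 1 + 1 < Real.exp (x - 1) := Real.add_one_lt_exp (by intro h; apply hx; linarith)
  have h2 : x < Real.exp (x - 1) := by linarith
  have h3 := mul_lt_mul_of_pos_right h2 (Real.exp_pos (-x))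
  calc x * Real.exp (-x) < Real.exp (x - 1) * Real.exp (-x) := h3
    _ = Real.exp (-1) := by rw [← Real.exp_add]; ring_nf

lemma aux_dec {x y : ℝ} (hy : 1 ≤ y) (hxy : y < x) :
    x * Real.exp (-x) < y * Real.exp (-y) := by
  have hy0 : 0 < y := lt_of_lt_of_le one_pos hy
  have h1 : x - y + 1 < Real.exp (x - y) := Real.add_one_lt_exp (by intro h; linarith [sub_eq_zero.mp h])
  have h2 : x < y * Real.exp (x - y) := by nlinarith [Real.exp_pos (x - y)]
  have h3 := mul_lt_mul_of_pos_right h2 (Real.exp_pos (-x))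
  calc x * Real.exp (-x) < y * Real.exp (x - y) * Real.exp (-x) := h3
    _ = y * Real.exp (-y) := by rw [mul_assoc, ← Real.exp_add]; ring_nf

lemma aux_scale {M k p q : ℝ} (hM : 0 < M) (hk : 0 < k)
    (h : (k * p) * Real.exp (-(k * p)) < (k * q) * Real.exp (-(k * q))) :
    p * M * Real.exp (-(k * p)) < q * M * Real.exp (-(k * q)) := by
  have hk' : k ≠ 0 := hk.ne'
  have h2 := mul_lt_mul_of_pos_left h (div_pos hM hk)
  calc p * M * Real.exp (-(k * p))
      = M / k * ((k * p) * Real.exp (-(k * p))) := by field_simp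
    _ < M / k * ((k * q) * Real.exp (-(k * q))) := h2
    _ = q * M * Real.exp (-(k * q)) := by field_simp

/-- Two-regime optimal price: p* = e/ε if M·exp(−1) ≤ f, else (e/ε)·ln(M/f),
is the unique maximizer of R(p) = p·M·exp(−εp/e) over {p ≥ 0 : M·exp(−εp/e) ≤ f}. -/
theorem stmt4 (M ε e f : ℝ) (hM : 0 < M) (hε : 0 < ε) (he : 0 < e) (hf : 0 < f) :
    let pstar : ℝ :=
      if M * Real.exp (-1) ≤ f then e / ε else (e / ε) * Real.log (M / f)
    (0 ≤ pstar ∧ M * Real.exp (-ε * pstar / e) ≤ f) ∧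
    ∀ p : ℝ, 0 ≤ p → M * Real.exp (-ε * p / e) ≤ f → p ≠ pstar →
      p * M * Real.exp (-ε * p / e) <
        pstar * M * Real.exp (-ε * pstar / e) := by
  intro pstar
  set k : ℝ := ε / e with hkdef
  have hk : 0 < k := div_pos hε he
  have hε' : ε ≠ 0 := hε.ne'
  have he' : e ≠ 0 := he.ne'
  have hk' : k ≠ 0 := hk.ne'
  have harg : ∀ p : ℝ, -ε * p / e = -(k * p) := by
    intro p; rw [hkdef]; field_simp
  by_cases hc : M * Real.exp (-1) ≤ f
  · have hps : pstar = e / ε := if_pos hc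
    have hkp : k * pstar = 1 := by rw [hps, hkdef]; field_simp
    refine ⟨⟨by rw [hps]; positivity, ?_⟩, ?_⟩
    · rw [harg, hkp]; exact hc
    · intro p hp0 hpf hne
      rw [harg, harg, hkp]
      have hx : k * p ≠ 1 := by
        intro h
        apply hne
        rw [hps]
        rw [hkdef] at h
        field_simp at h ⊢
        linarith
      have h1 : (k * p) * Real.exp (-(k * p)) < Real.exp (-1) := aux_peak hx
      have h2 : (k * p) * Real.exp (-(k * p)) < (k * pstar) * Real.exp (-(k * pstar)) := by
        rw [hkp]; simpa using h1
      have := aux_scale hM hk h2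
      rw [hkp] at this
      exact this
  · have hps : pstar = (e / ε) * Real.log (M / f) := if_neg hc
    push_neg at hc
    have hMf : 0 < M / f := div_pos hM hf
    have hc2 : f * Real.exp 1 < M := by
      have h := mul_lt_mul_of_pos_right hc (Real.exp_pos 1)
      rw [mul_assoc, ← Real.exp_add] at h
      simpa using h
    have hL : 1 < Real.log (M / f) := by
      rw [show (1 : ℝ) = Real.log (Real.exp 1) by rw [Real.log_exp]]
      apply Real.log_lt_log (Real.exp_pos 1)
      rw [lt_div_iff₀ hf]
      linarith
    set L := Real.log (M / f) with hLdef
    have hkp : k * pstar = L := by rw [hps, hkdef]; field_simp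
    have hfeas : M * Real.exp (-(k * pstar)) = f := by
      rw [hkp]
      show M * Real.exp (-Real.log (M / f)) = f
      rw [← Real.log_inv, Real.exp_log (by positivity)]
      field_simp
    refine ⟨⟨by rw [hps]; positivity, ?_⟩, ?_⟩
    · rw [harg, hfeas]
    · intro p hp0 hpf hne
      rw [harg] at hpf
      rw [harg, harg]
      have hge : L ≤ k * p := by
        have h1 : Real.exp (-(k * p)) ≤ Real.exp (-(k * pstar)) := by
          rw [← mul_le_mul_iff_right₀ hM, hfeas]
          exact hpf
        have h2 := Real.exp_le_exp.mp h1
        have h3 : k * pstar ≤ k * p := by linarith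
        rwa [hkp] at h3
      have hgt : L < k * p := by
        rcases lt_or_eq_of_le hge with h | h
        · exact h
        · exfalso; apply hne
          have : k * p = k * pstar := by rw [hkp, ← h]
          exact mul_left_cancel₀ hk' this
      have h2 : (k * p) * Real.exp (-(k * p)) < (k * pstar) * Real.exp (-(k * pstar)) := by
        rw [hkp]; exact aux_dec hL.le hgt
      exact aux_scale hM hk h2
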